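/- arXiv:0806.0978 — 5 statements merged into one kernel-verified Lean document; each statement's English description precedes it below -/
import Mathlib

section
/- For each i = 1,…,n define the k-derivation D_i := −Σ_{r=1}^n φ^r_i·δ_r of A. Then ⁅D_i, D_j⁆ = Σ_{s=1}^n C^s_{ij}·D_s for all i, j; consequently the k-linear map 𝔤 → Der_k(A) sending the basis element x̂_i to D_i is a homomorphism of Lie algebras. -/
open scoped BigOperators

/-- The derivations `D i = -∑ r, φ r i • δ r` satisfy
`⁅D i, D j⁆ = ∑ s, C s i j • D s`, hence `x̂ i ↦ D i` extends to a Lie algebra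
homomorphism `𝔤 → Der_k(A)`. -/
theorem twisted_derivations_lie_hom
    (k : Type*) [Field k] [CharZero k] (n : ℕ) (hn : 0 < n)
    (𝔤 : Type*) [LieRing 𝔤] [LieAlgebra k 𝔤]
    (b : Module.Basis (Fin n) k 𝔤)
    (C : Fin n → Fin n → Fin n → k)
    (hC : ∀ i j, ⁅b i, b j⁆ = ∑ s, C s i j • b s)
    (A : Type*) [CommRing A] [Algebra k A]
    (δ : Fin n → Derivation k A A)
    (hδ : ∀ r s, ⁅δ r, δ s⁆ = 0)
    (φ : Fin n → Fin n → A)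
    (hφ : ∀ i j m, ∑ l, (φ l j * δ l (φ m i) - φ l i * δ l (φ m j))
        = ∑ s, C s i j • φ m s)
    (D : Fin n → Derivation k A A)
    (hD : ∀ i, D i = -∑ r, φ r i • δ r) :
    (∀ i j, ⁅D i, D j⁆ = ∑ s, C s i j • D s) ∧
      ∃ f : 𝔤 →ₗ⁅k⁆ Derivation k A A, ∀ i, f (b i) = D i := by
  have hsum : ∀ (g : Fin n → Derivation k A A) (a : A), (∑ r, g r) a = ∑ r, g r a := by
    intro g a
    induction (Finset.univ : Finset (Fin n)) using Finset.induction with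
    | empty => simp
    | insert _ _ h ih => simp [Finset.sum_insert h, ih]
  have hDa : ∀ i a, D i a = -∑ r, φ r i * δ r a := by
    intro i a
    rw [hD i, Derivation.neg_apply, hsum]
    simp [Derivation.smul_apply, smul_eq_mul]
  have hcomm : ∀ r s (a : A), δ r (δ s a) = δ s (δ r a) := by
    intro r s a
    have h := congrArg (fun d : Derivation k A A => d a) (hδ r s)
    simp only [Derivation.commutator_apply, Derivation.zero_apply] at h
    exact sub_eq_zero.mp h
  have expand : ∀ (p q : Fin n) (a : A),
      D p (D q a) = ∑ l, ∑ r,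
        (φ l p * (δ l (φ r q) * δ r a) + φ l p * (φ r q * δ l (δ r a))) := by
    intro p q a
    rw [hDa p]
    have hterm : ∀ l, φ l p * δ l (D q a)
        = -∑ r, (φ l p * (δ l (φ r q) * δ r a) + φ l p * (φ r q * δ l (δ r a))) := by
      intro l
      rw [hDa q, map_neg, map_sum, mul_neg, Finset.mul_sum]
      refine neg_inj.mpr (Finset.sum_congr rfl fun r _ => ?_)
      rw [Derivation.leibniz, smul_eq_mul, smul_eq_mul]; ring
    rw [Finset.sum_congr rfl fun l _ => hterm l, Finset.sum_neg_distrib, neg_neg]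
  have main : ∀ i j, ⁅D i, D j⁆ = ∑ s, C s i j • D s := by
    intro i j
    ext a
    rw [Derivation.commutator_apply, hsum, expand, expand]
    have cross : (∑ l, ∑ r, φ l j * (φ r i * δ l (δ r a)))
        = ∑ l, ∑ r, φ l i * (φ r j * δ l (δ r a)) := by
      rw [Finset.sum_comm]
      exact Finset.sum_congr rfl fun l _ => Finset.sum_congr rfl fun r _ => by
        rw [hcomm r l a]; ring
    have hRHS : (∑ s, (C s i j • D s) a) = ∑ r, (-(∑ s, C s i j • φ r s)) * δ r a := by
      calc ∑ s, (C s i j • D s) a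
          = ∑ s, ∑ r, -(C s i j • (φ r s * δ r a)) := by
            refine Finset.sum_congr rfl fun s _ => ?_
            rw [Derivation.smul_apply, hDa, smul_neg, Finset.smul_sum,
              ← Finset.sum_neg_distrib]
        _ = ∑ r, ∑ s, -(C s i j • (φ r s * δ r a)) := Finset.sum_comm
        _ = ∑ r, (-(∑ s, C s i j • φ r s)) * δ r a := by
            refine Finset.sum_congr rfl fun r _ => ?_
            rw [neg_mul, Finset.sum_mul, ← Finset.sum_neg_distrib]
            exact Finset.sum_congr rfl fun s _ => by rw [smul_mul_assoc]
    rw [hRHS]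
    calc (∑ l, ∑ r, (φ l i * (δ l (φ r j) * δ r a) + φ l i * (φ r j * δ l (δ r a))))
          - ∑ l, ∑ r, (φ l j * (δ l (φ r i) * δ r a) + φ l j * (φ r i * δ l (δ r a)))
        = ∑ l, ∑ r, (φ l i * δ l (φ r j) - φ l j * δ l (φ r i)) * δ r a := by
          simp only [Finset.sum_add_distrib]
          rw [cross, add_sub_add_right_eq_sub, ← Finset.sum_sub_distrib]
          refine Finset.sum_congr rfl fun l _ => ?_
          rw [← Finset.sum_sub_distrib]
          exact Finset.sum_congr rfl fun r _ => by ring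
      _ = ∑ r, (∑ l, (φ l i * δ l (φ r j) - φ l j * δ l (φ r i))) * δ r a := by
          rw [Finset.sum_comm]
          exact Finset.sum_congr rfl fun r _ => by rw [Finset.sum_mul]
      _ = ∑ r, (-(∑ s, C s i j • φ r s)) * δ r a := by
          refine Finset.sum_congr rfl fun r _ => ?_
          rw [← hφ i j r, ← Finset.sum_neg_distrib]
          congr 1
          exact Finset.sum_congr rfl fun l _ => by ring
  refine ⟨main, ?_⟩
  set f0 : 𝔤 →ₗ[k] Derivation k A A := b.constr k D with hf0def
  have hf0 : ∀ i, f0 (b i) = D i := fun i => b.constr_basis k D i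
  let B1 : 𝔤 →ₗ[k] 𝔤 →ₗ[k] Derivation k A A :=
    LinearMap.mk₂ k (fun x y => f0 ⁅x, y⁆)
      (fun x x' y => by simp only [add_lie, map_add])
      (fun c x y => by simp only [smul_lie, map_smul])
      (fun x y y' => by simp only [lie_add, map_add])
      (fun c x y => by simp only [lie_smul, map_smul])
  let B2 : 𝔤 →ₗ[k] 𝔤 →ₗ[k] Derivation k A A :=
    LinearMap.mk₂ k (fun x y => ⁅f0 x, f0 y⁆)
      (fun x x' y => by simp only [map_add, add_lie])
      (fun c x y => by simp only [map_smul, smul_lie])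
      (fun x y y' => by simp only [map_add, lie_add])
      (fun c x y => by simp only [map_smul]; exact lie_smul c (f0 x) (f0 y))
  have hB : B1 = B2 := by
    apply b.ext; intro i; apply b.ext; intro j
    simp only [B1, B2, LinearMap.mk₂_apply]
    rw [hC i j, map_sum]
    simp only [map_smul, hf0]
    rw [main]
  refine ⟨{ toLinearMap := f0, map_lie' := ?_ }, hf0⟩
  intro x y
  exact LinearMap.congr_fun (LinearMap.congr_fun hB x) y
end

section
/- The k-linear map sending the basis element x̂_i of 𝔤 to the derivation D_i := −Σ_{r=1}^n φ^r_i·(pderiv r) of MvPolynomial (Fin n) k is a homomorphism of Lie algebras (equivalently, ⁅D_i, D_j⁆ = Σ_{s=1}^n C^s_{ij}·D_s for all i, j) if and only if the matrix φ satisfies Σ_l (φ^l_j·(pderiv l)(φ^k_i) − φ^l_i·(pderiv l)(φ^k_j)) = Σ_s C^s_{ij}·φ^k_s for all i, j, k. -/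
open scoped BigOperators
open MvPolynomial

/-- For `D i = -∑ r, φ r i • pderiv r` on `MvPolynomial (Fin n) k`,
the bracket identity `⁅D i, D j⁆ = ∑ s, C s i j • D s` (i.e. `x̂ i ↦ D i` is a
Lie algebra homomorphism) holds if and only if `φ` satisfies the structure
equation. -/
theorem twisted_derivations_iff_structure_equation
    (k : Type*) [Field k] [CharZero k] (n : ℕ) (hn : 0 < n)
    (𝔤 : Type*) [LieRing 𝔤] [LieAlgebra k 𝔤]
    (b : Module.Basis (Fin n) k 𝔤)
    (C : Fin n → Fin n → Fin n → k)
    (hC : ∀ i j, ⁅b i, b j⁆ = ∑ s, C s i j • b s)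
    (φ : Fin n → Fin n → MvPolynomial (Fin n) k)
    (D : Fin n → Derivation k (MvPolynomial (Fin n) k) (MvPolynomial (Fin n) k))
    (hD : ∀ i, D i = -∑ r, φ r i • pderiv r) :
    (∀ i j, ⁅D i, D j⁆ = ∑ s, C s i j • D s) ↔
      (∀ i j m, ∑ l, (φ l j * pderiv l (φ m i) - φ l i * pderiv l (φ m j))
          = ∑ s, C s i j • φ m s) := by
  have sum_apply : ∀ (f : Fin n → Derivation k (MvPolynomial (Fin n) k)
      (MvPolynomial (Fin n) k)) (p : MvPolynomial (Fin n) k),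
      (∑ r, f r) p = ∑ r, f r p := by
    intro f p
    have h1 : ⇑(∑ r, f r) = ∑ r, ⇑(f r) :=
      map_sum (Derivation.coeFnAddMonoidHom
        (R := k) (A := MvPolynomial (Fin n) k) (M := MvPolynomial (Fin n) k))
        f Finset.univ
    rw [show (∑ r, f r) p = (∑ r, ⇑(f r)) p from congrFun h1 p,
      Finset.sum_apply]
  have happ : ∀ i p, D i p = -∑ r, φ r i * pderiv r p := by
    intro i p
    rw [hD]
    simp [sum_apply, smul_eq_mul]
  have hX : ∀ i m, D i (X m) = -φ m i := by
    intro i m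
    rw [happ]
    simp [pderiv_X, Pi.single_apply]
  have key : ∀ i j m, ⁅D i, D j⁆ (X m) - (∑ s, C s i j • D s) (X m)
      = -(∑ l, (φ l j * pderiv l (φ m i) - φ l i * pderiv l (φ m j))
          - ∑ s, C s i j • φ m s) := by
    intro i j m
    rw [Derivation.commutator_apply, hX, hX, map_neg, map_neg, happ, happ]
    have : (∑ s, C s i j • D s) (X m) = ∑ s, C s i j • D s (X m) := by
      simp [sum_apply]
    rw [this]
    simp only [hX, smul_neg, Finset.sum_neg_distrib]
    rw [Finset.sum_sub_distrib]
    ring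
  constructor
  · intro h i j m
    have := key i j m
    rw [h i j, sub_self] at this
    have h2 : (∑ l, (φ l j * pderiv l (φ m i) - φ l i * pderiv l (φ m j))
        - ∑ s, C s i j • φ m s) = 0 := by
      have := this.symm
      rwa [neg_eq_zero] at this
    linear_combination h2
  · intro h i j
    apply derivation_ext
    intro m
    have := key i j m
    rw [h i j, sub_self, neg_zero, sub_eq_zero] at this
    exact this
end

section
/- Define X_i := Σ_{a=1}^n x_a·ι(φ^a_i) ∈ B for i = 1,…,n. Then X_i·X_j − X_j·X_i = Σ_{k=1}^n C^k_{ij}·X_k for all i, j; consequently the linear map 𝔤 → B sending x̂_i to X_i is a Lie algebra homomorphism into B equipped with the commutator bracket. -/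
open scoped BigOperators

attribute [local instance] LieRing.ofAssociativeRing

/-- in the (semicompleted) Weyl-algebra-type realization `B`,
the elements `X i = ∑ a, x a * ι (φ a i)` satisfy
`X i * X j - X j * X i = ∑ s, C s i j • X s`; consequently `x̂ i ↦ X i` is a
Lie algebra homomorphism of `𝔤` into `B` with the commutator bracket. -/
theorem phi_realization_lie_hom
    (k : Type*) [Field k] [CharZero k] (n : ℕ) (hn : 0 < n)
    (𝔤 : Type*) [LieRing 𝔤] [LieAlgebra k 𝔤]
    (b : Module.Basis (Fin n) k 𝔤)
    (C : Fin n → Fin n → Fin n → k)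
    (hC : ∀ i j, ⁅b i, b j⁆ = ∑ s, C s i j • b s)
    (A : Type*) [CommRing A] [Algebra k A]
    (δ : Fin n → Derivation k A A)
    (hδ : ∀ r s, ⁅δ r, δ s⁆ = 0)
    (φ : Fin n → Fin n → A)
    (hφ : ∀ i j m, ∑ l, (φ l j * δ l (φ m i) - φ l i * δ l (φ m j))
        = ∑ s, C s i j • φ m s)
    (B : Type*) [Ring B] [Algebra k B]
    (ι : A →ₐ[k] B)
    (x : Fin n → B)
    (hxx : ∀ i j, x i * x j = x j * x i)
    (hrel : ∀ (a : A) (j : Fin n), ι a * x j - x j * ι a = ι (δ j a))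
    (X : Fin n → B)
    (hX : ∀ i, X i = ∑ a, x a * ι (φ a i)) :
    (∀ i j, X i * X j - X j * X i = ∑ s, C s i j • X s) ∧
      ∃ f : 𝔤 →ₗ⁅k⁆ B, ∀ i, f (b i) = X i := by
  have hmove : ∀ (a : A) (c : Fin n), ι a * x c = x c * ι a + ι (δ c a) := by
    intro a c
    have h := hrel a c
    rw [sub_eq_iff_eq_add] at h
    rw [h, add_comm]
  have expand : ∀ p q : Fin n, X p * X q =
      (∑ a, ∑ c, x a * x c * (ι (φ a p) * ι (φ c q)))
        + ∑ a, x a * ι (∑ c, φ c q * δ c (φ a p)) := by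
    intro p q
    rw [hX, hX, Finset.sum_mul_sum]
    have hterm : ∀ a c : Fin n, (x a * ι (φ a p)) * (x c * ι (φ c q))
        = x a * x c * (ι (φ a p) * ι (φ c q))
          + x a * ι (φ c q * δ c (φ a p)) := by
      intro a c
      have h0 : (x a * ι (φ a p)) * (x c * ι (φ c q))
          = x a * ((ι (φ a p) * x c) * ι (φ c q)) := by noncomm_ring
      have hc : ι (δ c (φ a p)) * ι (φ c q) = ι (φ c q * δ c (φ a p)) := by
        rw [← map_mul, mul_comm]
      rw [h0, hmove, add_mul, hc]
      noncomm_ring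
    calc (∑ a, ∑ c, (x a * ι (φ a p)) * (x c * ι (φ c q)))
        = ∑ a, ∑ c, (x a * x c * (ι (φ a p) * ι (φ c q))
            + x a * ι (φ c q * δ c (φ a p))) := by
          exact Finset.sum_congr rfl fun a _ =>
            Finset.sum_congr rfl fun c _ => hterm a c
      _ = (∑ a, ∑ c, x a * x c * (ι (φ a p) * ι (φ c q)))
            + ∑ a, ∑ c, x a * ι (φ c q * δ c (φ a p)) := by
          rw [← Finset.sum_add_distrib]
          exact Finset.sum_congr rfl fun a _ => Finset.sum_add_distrib
      _ = (∑ a, ∑ c, x a * x c * (ι (φ a p) * ι (φ c q)))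
            + ∑ a, x a * ι (∑ c, φ c q * δ c (φ a p)) := by
          congr 1
          exact Finset.sum_congr rfl fun a _ => by
            rw [map_sum, Finset.mul_sum]
  have hsymm : ∀ p q : Fin n,
      (∑ a, ∑ c, x a * x c * (ι (φ a p) * ι (φ c q)))
        = ∑ a, ∑ c, x a * x c * (ι (φ a q) * ι (φ c p)) := by
    intro p q
    rw [Finset.sum_comm]
    exact Finset.sum_congr rfl fun a _ => Finset.sum_congr rfl fun c _ => by
      rw [hxx c a, ← map_mul, ← map_mul, mul_comm (φ c p)]
  have hmain : ∀ i j, X i * X j - X j * X i = ∑ s, C s i j • X s := by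
    intro i j
    rw [expand i j, expand j i, hsymm i j]
    rw [add_sub_add_left_eq_sub, ← Finset.sum_sub_distrib]
    have : ∀ a : Fin n,
        x a * ι (∑ c, φ c j * δ c (φ a i)) - x a * ι (∑ c, φ c i * δ c (φ a j))
          = ∑ s, C s i j • (x a * ι (φ a s)) := by
      intro a
      rw [← mul_sub, ← map_sub, ← Finset.sum_sub_distrib, hφ i j a, map_sum,
        Finset.mul_sum]
      exact Finset.sum_congr rfl fun s _ => by
        rw [map_smul, mul_smul_comm]
    rw [Finset.sum_congr rfl fun a _ => this a, Finset.sum_comm]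
    exact Finset.sum_congr rfl fun s _ => by rw [← Finset.smul_sum, hX]
  refine ⟨hmain, ?_⟩
  set f : 𝔤 →ₗ[k] B := b.constr k X with hf
  have hfb : ∀ i, f (b i) = X i := fun i => b.constr_basis k X i
  set D : 𝔤 →ₗ[k] 𝔤 →ₗ[k] B :=
    LinearMap.mk₂ k (fun u v => f ⁅u, v⁆ - ⁅f u, f v⁆)
      (fun u u' v => by
        simp [add_lie, Ring.lie_def, add_mul, mul_add]; abel)
      (fun c u v => by
        simp [smul_lie, Ring.lie_def, smul_sub, smul_mul_assoc, mul_smul_comm])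
      (fun u v v' => by
        simp [lie_add, Ring.lie_def, add_mul, mul_add]; abel)
      (fun c u v => by
        simp [lie_smul, Ring.lie_def, smul_sub, smul_mul_assoc, mul_smul_comm])
      with hD
  have hD0 : D = 0 := by
    apply b.ext; intro i
    apply b.ext; intro j
    simp only [hD, LinearMap.mk₂_apply, LinearMap.zero_apply]
    rw [hC i j, map_sum]
    simp only [map_smul, hfb, Ring.lie_def, hmain i j]
    exact sub_eq_zero.mpr rfl
  refine ⟨{ toLinearMap := f, map_lie' := ?_ }, hfb⟩
  intro u v
  have := congrFun (congrArg (fun g => fun u v => g u v) hD0) u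
  have h2 : D u v = 0 := by rw [hD0]; rfl
  exact (by simpa only [hD, LinearMap.mk₂_apply, sub_eq_zero] using h2 : f ⁅u, v⁆ = ⁅f u, f v⁆)
end

section
/- Suppose p^1,…,p^n ∈ A satisfy δ_a(p^j) = δ^j_a·1_A (Kronecker delta) for all a, j. Then for all i, j one has ι(p^j)·X_i − X_i·ι(p^j) = ι(φ^j_i) in B; that is, the deformed Heisenberg relation [∂^j, x̂_i] = φ^j_i holds in the realization. -/
open scoped BigOperators

/-- if `p^1, …, p^n ∈ A` satisfy `δ_a(p^j) = δ^j_a` (Kronecker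
delta), then the deformed Heisenberg relation
`ι(p^j) * X i - X i * ι(p^j) = ι(φ^j_i)` holds in the realization `B`,
i.e. `[∂^j, x̂_i] = φ^j_i`. -/
theorem deformed_heisenberg_relation
    (k : Type*) [Field k] [CharZero k] (n : ℕ) (hn : 0 < n)
    (𝔤 : Type*) [LieRing 𝔤] [LieAlgebra k 𝔤]
    (b : Module.Basis (Fin n) k 𝔤)
    (C : Fin n → Fin n → Fin n → k)
    (hC : ∀ i j, ⁅b i, b j⁆ = ∑ s, C s i j • b s)
    (A : Type*) [CommRing A] [Algebra k A]
    (δ : Fin n → Derivation k A A)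
    (hδ : ∀ r s, ⁅δ r, δ s⁆ = 0)
    (φ : Fin n → Fin n → A)
    (hφ : ∀ i j m, ∑ l, (φ l j * δ l (φ m i) - φ l i * δ l (φ m j))
        = ∑ s, C s i j • φ m s)
    (B : Type*) [Ring B] [Algebra k B]
    (ι : A →ₐ[k] B)
    (x : Fin n → B)
    (hxx : ∀ i j, x i * x j = x j * x i)
    (hrel : ∀ (a : A) (j : Fin n), ι a * x j - x j * ι a = ι (δ j a))
    (X : Fin n → B)
    (hX : ∀ i, X i = ∑ a, x a * ι (φ a i))
    (p : Fin n → A)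
    (hp : ∀ a j, δ a (p j) = if a = j then (1 : A) else 0) :
    ∀ i j, ι (p j) * X i - X i * ι (p j) = ι (φ j i) := by
  intro i j
  rw [hX, Finset.mul_sum, Finset.sum_mul, ← Finset.sum_sub_distrib]
  have key : ∀ a : Fin n,
      ι (p j) * (x a * ι (φ a i)) - x a * ι (φ a i) * ι (p j)
        = if a = j then ι (φ j i) else 0 := by
    intro a
    have hcomm : ι (φ a i) * ι (p j) = ι (p j) * ι (φ a i) := by
      rw [← map_mul, ← map_mul, mul_comm]
    have h1 : ι (p j) * (x a * ι (φ a i)) - x a * ι (φ a i) * ι (p j)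
        = (ι (p j) * x a - x a * ι (p j)) * ι (φ a i) := by
      rw [sub_mul, mul_assoc (x a) (ι (φ a i)) (ι (p j)), hcomm]; simp only [mul_assoc]
    rw [h1, hrel, hp]
    split
    · next h => subst h; simp
    · simp
  rw [Finset.sum_congr rfl (fun a _ => key a)]
  simp
end

section
/- In the algebra Λ ⊗ B define dX_i := Σ_{a=1}^n e_a ⊗ ι(φ^a_i) and identify X_j with 1 ⊗ X_j. Then for all i, j one has the commutation relation dX_i·X_j − X_j·dX_i = Σ_{s,r,l} dX_s·(1 ⊗ ι((φ⁻¹)^s_r·δ_l(φ^r_i)·φ^l_j)); that is, the relation [dx̂_i, x̂_j] = Σ dx̂_s (φ⁻¹)^s_r (∂_l φ^r_i) φ^l_j of the twisted differential calculus holds in the realization. -/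
open scoped BigOperators TensorProduct

lemma sum_reorder4 {M : Type*} [AddCommMonoid M] {n : ℕ}
    (F : Fin n → Fin n → Fin n → Fin n → M) :
    ∑ s, ∑ r, ∑ l, ∑ a, F s r l a = ∑ a, ∑ l, ∑ s, ∑ r, F s r l a := by
  calc ∑ s, ∑ r, ∑ l, ∑ a, F s r l a
      = ∑ s, ∑ r, ∑ a, ∑ l, F s r l a :=
        Finset.sum_congr rfl fun s _ => Finset.sum_congr rfl fun r _ => Finset.sum_comm
    _ = ∑ s, ∑ a, ∑ r, ∑ l, F s r l a :=
        Finset.sum_congr rfl fun s _ => Finset.sum_comm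
    _ = ∑ a, ∑ s, ∑ r, ∑ l, F s r l a := Finset.sum_comm
    _ = ∑ a, ∑ s, ∑ l, ∑ r, F s r l a :=
        Finset.sum_congr rfl fun a _ => Finset.sum_congr rfl fun s _ => Finset.sum_comm
    _ = ∑ a, ∑ l, ∑ s, ∑ r, F s r l a :=
        Finset.sum_congr rfl fun a _ => Finset.sum_comm

/-- in `Λ ⊗ B`, with `dX i = ∑ a, e_a ⊗ ι(φ^a_i)` and `X j`
identified with `1 ⊗ X j`, the commutation relation
`[dx̂_i, x̂_j] = ∑ dx̂_s (φ⁻¹)^s_r (∂_l φ^r_i) φ^l_j` of the twisted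
differential calculus holds in the realization. -/
theorem twisted_differential_commutation
    (k : Type*) [Field k] [CharZero k] (n : ℕ) (hn : 0 < n)
    (𝔤 : Type*) [LieRing 𝔤] [LieAlgebra k 𝔤]
    (b : Module.Basis (Fin n) k 𝔤)
    (C : Fin n → Fin n → Fin n → k)
    (hC : ∀ i j, ⁅b i, b j⁆ = ∑ s, C s i j • b s)
    (A : Type*) [CommRing A] [Algebra k A]
    (δ : Fin n → Derivation k A A)
    (hδ : ∀ r s, ⁅δ r, δ s⁆ = 0)
    (φ : Fin n → Fin n → A)
    (hφ : ∀ i j m, ∑ l, (φ l j * δ l (φ m i) - φ l i * δ l (φ m j))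
        = ∑ s, C s i j • φ m s)
    (ψ : Matrix (Fin n) (Fin n) A)
    (hψ₁ : Matrix.of φ * ψ = 1) (hψ₂ : ψ * Matrix.of φ = 1)
    (B : Type*) [Ring B] [Algebra k B]
    (ι : A →ₐ[k] B)
    (x : Fin n → B)
    (hxx : ∀ i j, x i * x j = x j * x i)
    (hrel : ∀ (a : A) (j : Fin n), ι a * x j - x j * ι a = ι (δ j a))
    (X : Fin n → B)
    (hX : ∀ i, X i = ∑ a, x a * ι (φ a i))
    (dX : Fin n → ExteriorAlgebra k (Fin n → k) ⊗[k] B)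
    (hdX : ∀ i, dX i = ∑ a, ExteriorAlgebra.ι k (Pi.single a (1 : k)) ⊗ₜ[k] ι (φ a i)) :
    ∀ i j, dX i * ((1 : ExteriorAlgebra k (Fin n → k)) ⊗ₜ[k] X j)
        - ((1 : ExteriorAlgebra k (Fin n → k)) ⊗ₜ[k] X j) * dX i
      = ∑ s, ∑ r, ∑ l, dX s *
          ((1 : ExteriorAlgebra k (Fin n → k)) ⊗ₜ[k] ι (ψ s r * δ l (φ r i) * φ l j)) := by
  intro i j
  set E : Fin n → ExteriorAlgebra k (Fin n → k) :=
    fun a => ExteriorAlgebra.ι k (Pi.single a (1 : k)) with hE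
  -- commutator of ι a with X j
  have key : ∀ a : A, ι a * X j - X j * ι a = ∑ l, ι (δ l a * φ l j) := by
    intro a
    rw [hX, Finset.mul_sum, Finset.sum_mul, ← Finset.sum_sub_distrib]
    refine Finset.sum_congr rfl fun l _ => ?_
    have hcomm : ι (φ l j) * ι a = ι a * ι (φ l j) := by
      rw [← map_mul, ← map_mul, mul_comm]
    calc ι a * (x l * ι (φ l j)) - x l * ι (φ l j) * ι a
        = ι a * x l * ι (φ l j) - x l * (ι (φ l j) * ι a) := by rw [mul_assoc, mul_assoc]
      _ = ι a * x l * ι (φ l j) - x l * ι a * ι (φ l j) := by rw [hcomm, ← mul_assoc]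
      _ = (ι a * x l - x l * ι a) * ι (φ l j) := by rw [sub_mul]
      _ = ι (δ l a * φ l j) := by rw [hrel, map_mul]
  -- the A-level identity
  have hA : ∀ a l : Fin n,
      (∑ s, ∑ r, φ a s * (ψ s r * δ l (φ r i) * φ l j)) = δ l (φ a i) * φ l j := by
    intro a l
    have h1 : ∀ r, ∑ s, φ a s * ψ s r = (1 : Matrix (Fin n) (Fin n) A) a r := by
      intro r; rw [← hψ₁]; simp [Matrix.mul_apply]
    calc ∑ s, ∑ r, φ a s * (ψ s r * δ l (φ r i) * φ l j)
        = ∑ r, (∑ s, φ a s * ψ s r) * (δ l (φ r i) * φ l j) := by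
          rw [Finset.sum_comm]
          refine Finset.sum_congr rfl fun r _ => ?_
          rw [Finset.sum_mul]
          exact Finset.sum_congr rfl fun s _ => by ring
      _ = δ l (φ a i) * φ l j := by
          simp only [h1, Matrix.one_apply, ite_mul, one_mul, zero_mul]
          rw [Finset.sum_ite_eq]
          simp
  -- LHS
  have lhs_eq : dX i * ((1 : ExteriorAlgebra k (Fin n → k)) ⊗ₜ[k] X j)
        - ((1 : ExteriorAlgebra k (Fin n → k)) ⊗ₜ[k] X j) * dX i
      = ∑ a, ∑ l, E a ⊗ₜ[k] ι (δ l (φ a i) * φ l j) := by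
    rw [hdX, Finset.sum_mul, Finset.mul_sum, ← Finset.sum_sub_distrib]
    refine Finset.sum_congr rfl fun a _ => ?_
    rw [Algebra.TensorProduct.tmul_mul_tmul, Algebra.TensorProduct.tmul_mul_tmul,
      mul_one, one_mul, ← TensorProduct.tmul_sub, key, TensorProduct.tmul_sum]
  rw [lhs_eq]
  -- RHS
  have rhs_eq : ∀ s r l : Fin n, dX s *
        ((1 : ExteriorAlgebra k (Fin n → k)) ⊗ₜ[k] ι (ψ s r * δ l (φ r i) * φ l j))
      = ∑ a, E a ⊗ₜ[k] ι (φ a s * (ψ s r * δ l (φ r i) * φ l j)) := by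
    intro s r l
    rw [hdX, Finset.sum_mul]
    refine Finset.sum_congr rfl fun a _ => ?_
    rw [Algebra.TensorProduct.tmul_mul_tmul, mul_one, ← map_mul]
  simp only [rhs_eq]
  rw [sum_reorder4]
  refine Finset.sum_congr rfl fun a _ => Finset.sum_congr rfl fun l _ => ?_
  rw [← hA a l]
  simp only [map_sum, TensorProduct.tmul_sum]
end
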